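/- Partition regret decomposition: let $\mathcal{Q}$ be a finite family of index sets and suppose for each $F \in \mathcal{Q}$ an algorithm produces predictions $\mathbf{w}_t^F \in \mathbb{R}^d$ whose linearized regret on the rounds assigned to $F$ satisfies $\tilde{\mathcal{R}}_F(\mathbf{0}) := \sum_{t : I_t \in F} \langle \mathbf{w}_t^F, \mathbf{g}_t \rangle \le \nu$. Let losses $\ell_t$ be convex with $\mathbf{g}_t$ a subgradient of $\ell_t$ at $\mathbf{w}_t := \sum_{F \in \mathcal{Q}} \mathbf{w}_t^F \mathbb{1}\{I_t \in F\}$. Then for any pairwise disjoint $F_1,\dots,F_r \in \mathcal{Q}$ covering all activated indices and any $\mathbf{u}_1,\dots,\mathbf{u}_r \in \mathbb{R}^d$: $\sum_{t=1}^T \ell_t(\mathbf{w}_t) - \sum_{j=1}^r \sum_{t : I_t \in F_j} \ell_t(\mathbf{u}_j) \le |\mathcal{Q}|\nu + \sum_{j=1}^r \sum_{t : I_t \in F_j} \langle \mathbf{w}_t^{F_j} - \mathbf{u}_j, \mathbf{g}_t \rangle$. -/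

import Mathlib

theorem stmt18 {ι : Type*} [DecidableEq ι] (d T r : ℕ) (I : Fin T → ι)
    (Q : Finset (Finset ι))
    (w : Finset ι → Fin T → EuclideanSpace ℝ (Fin d))
    (g : Fin T → EuclideanSpace ℝ (Fin d))
    (ℓ : Fin T → EuclideanSpace ℝ (Fin d) → ℝ)
    (ν : ℝ) (hν : 0 < ν)
    (hreg : ∀ F ∈ Q,
      ∑ t ∈ Finset.univ.filter (fun t => I t ∈ F), (inner ℝ (w F t) (g t) : ℝ) ≤ ν)
    (hsub : ∀ t (u : EuclideanSpace ℝ (Fin d)),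
      ℓ t (∑ F ∈ Q, if I t ∈ F then w F t else 0) - ℓ t u
        ≤ (inner ℝ ((∑ F ∈ Q, if I t ∈ F then w F t else 0) - u) (g t) : ℝ))
    (F : Fin r → Finset ι) (hFQ : ∀ j, F j ∈ Q)
    (hdisj : ∀ j k, j ≠ k → Disjoint (F j) (F k))
    (hcover : ∀ t, ∃ j, I t ∈ F j)
    (u : Fin r → EuclideanSpace ℝ (Fin d)) :
    ∑ t, ℓ t (∑ F' ∈ Q, if I t ∈ F' then w F' t else 0)
      - ∑ j, ∑ t ∈ Finset.univ.filter (fun t => I t ∈ F j), ℓ t (u j)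
    ≤ Q.card * ν
      + ∑ j, ∑ t ∈ Finset.univ.filter (fun t => I t ∈ F j),
          (inner ℝ (w (F j) t - u j) (g t) : ℝ) := by
  classical
  set W : Fin T → EuclideanSpace ℝ (Fin d) :=
    fun t => ∑ F' ∈ Q, if I t ∈ F' then w F' t else 0 with hW
  -- partition lemma
  have hpart : ∀ f : Fin T → ℝ,
      ∑ t, f t = ∑ j, ∑ t ∈ Finset.univ.filter (fun t => I t ∈ F j), f t := by
    intro f
    simp only [Finset.sum_filter]
    rw [Finset.sum_comm]
    refine Finset.sum_congr rfl (fun t _ => ?_)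
    obtain ⟨j, hj⟩ := hcover t
    rw [Finset.sum_eq_single_of_mem j (Finset.mem_univ j)]
    · simp [hj]
    · intro k _ hk
      have : I t ∉ F k := fun h =>
        Finset.disjoint_left.mp (hdisj j k hk.symm) hj h
      simp [this]
  -- define a
  set a : Finset ι → ℝ :=
    fun G => ∑ t ∈ Finset.univ.filter (fun t => I t ∈ G), (inner ℝ (w G t) (g t) : ℝ) with ha
  have haν : ∀ G ∈ Q, a G ≤ ν := hreg
  -- sum of inner W
  have hWg : ∑ t, (inner ℝ (W t) (g t) : ℝ) = ∑ G ∈ Q, a G := by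
    have : ∀ t, (inner ℝ (W t) (g t) : ℝ)
        = ∑ G ∈ Q, if I t ∈ G then (inner ℝ (w G t) (g t) : ℝ) else 0 := by
      intro t
      rw [hW]
      simp only [sum_inner]
      refine Finset.sum_congr rfl (fun G _ => ?_)
      split <;> simp
    simp only [this]
    rw [Finset.sum_comm]
    refine Finset.sum_congr rfl (fun G _ => ?_)
    simp only [ha]
    exact (Finset.sum_filter _ _).symm
  -- image of nonempty F j
  set Simg : Finset (Finset ι) :=
    (Finset.univ.filter (fun j => (F j).Nonempty)).image F with hSimg
  have hsub' : Simg ⊆ Q := by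
    intro G hG
    simp only [hSimg, Finset.mem_image, Finset.mem_filter] at hG
    obtain ⟨j, _, rfl⟩ := hG
    exact hFQ j
  have hsumj : ∑ j, a (F j) = ∑ G ∈ Simg, a G := by
    rw [hSimg, Finset.sum_image]
    · rw [← Finset.sum_filter_add_sum_filter_not Finset.univ (fun j => (F j).Nonempty)]
      have : ∑ j ∈ Finset.univ.filter (fun j => ¬ (F j).Nonempty), a (F j) = 0 := by
        refine Finset.sum_eq_zero (fun j hj => ?_)
        simp only [Finset.mem_filter, Finset.not_nonempty_iff_eq_empty] at hj
        simp [ha, hj.2]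
      rw [this, add_zero]
    · intro j hj k hk hjk
      by_contra h
      have := hdisj j k h
      rw [hjk] at this
      rw [Finset.mem_coe, Finset.mem_filter] at hk
      exact hk.2.ne_empty (Finset.bot_eq_empty ▸ disjoint_self.mp this)
  -- key bound
  have hkey : ∑ G ∈ Q, a G ≤ Q.card * ν + ∑ G ∈ Simg, a G := by
    rw [← Finset.sum_sdiff hsub']
    have h1 : ∑ G ∈ Q \ Simg, a G ≤ (Q \ Simg).card * ν :=
      Finset.sum_le_card_nsmul _ _ ν (fun G hG => haν G (Finset.mem_sdiff.mp hG).1)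
        |>.trans_eq (by simp [nsmul_eq_mul])
    have h2 : ((Q \ Simg).card : ℝ) * ν ≤ Q.card * ν := by
      apply mul_le_mul_of_nonneg_right _ hν.le
      exact_mod_cast Finset.card_le_card (Finset.sdiff_subset)
    linarith
  -- main chain
  have hmain : ∑ t, ℓ t (W t)
      - ∑ j, ∑ t ∈ Finset.univ.filter (fun t => I t ∈ F j), ℓ t (u j)
      ≤ ∑ t, (inner ℝ (W t) (g t) : ℝ)
        - ∑ j, ∑ t ∈ Finset.univ.filter (fun t => I t ∈ F j), (inner ℝ (u j) (g t) : ℝ) := by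
    rw [hpart (fun t => ℓ t (W t)), hpart (fun t => (inner ℝ (W t) (g t) : ℝ)),
      ← Finset.sum_sub_distrib, ← Finset.sum_sub_distrib]
    refine Finset.sum_le_sum (fun j _ => ?_)
    rw [← Finset.sum_sub_distrib, ← Finset.sum_sub_distrib]
    refine Finset.sum_le_sum (fun t _ => ?_)
    have := hsub t (u j)
    rw [inner_sub_left] at this
    exact this
  have hrhs : ∑ j, ∑ t ∈ Finset.univ.filter (fun t => I t ∈ F j),
        (inner ℝ (w (F j) t - u j) (g t) : ℝ)
      = ∑ j, a (F j)
        - ∑ j, ∑ t ∈ Finset.univ.filter (fun t => I t ∈ F j), (inner ℝ (u j) (g t) : ℝ) := by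
    rw [← Finset.sum_sub_distrib]
    refine Finset.sum_congr rfl (fun j _ => ?_)
    rw [ha, ← Finset.sum_sub_distrib]
    exact Finset.sum_congr rfl (fun t _ => by rw [inner_sub_left])
  calc ∑ t, ℓ t (W t) - ∑ j, ∑ t ∈ Finset.univ.filter (fun t => I t ∈ F j), ℓ t (u j)
      ≤ ∑ t, (inner ℝ (W t) (g t) : ℝ)
        - ∑ j, ∑ t ∈ Finset.univ.filter (fun t => I t ∈ F j), (inner ℝ (u j) (g t) : ℝ) := hmain
    _ ≤ Q.card * ν + ∑ G ∈ Simg, a G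
        - ∑ j, ∑ t ∈ Finset.univ.filter (fun t => I t ∈ F j), (inner ℝ (u j) (g t) : ℝ) := by
        rw [hWg]; linarith
    _ = Q.card * ν + ∑ j, ∑ t ∈ Finset.univ.filter (fun t => I t ∈ F j),
          (inner ℝ (w (F j) t - u j) (g t) : ℝ) := by
        rw [hrhs, hsumj]; ring
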